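/- Let N be a binary normal network on X whose display set is P. If {a,b} is a cherry of N (the leaves a and b share a parent), then {a,b} is a cherry of every tree in P. -/

import Mathlib

structure Net (X : Type) where
  V : Type
  fintypeV : Fintype V
  E : V → V → Prop
  root : V
  leaf : X → V
  leaf_inj : Function.Injective leaf
  acyclic : ∀ v : V, ¬ Relation.TransGen E v v
  no_in_root : ∀ u : V, ¬ E u root
  connected : ∀ v : V, Relation.ReflTransGen E root v

namespace Net

variable {X : Type} (N : Net X)

noncomputable instance : Fintype N.V := N.fintypeV

/-- The in-degree of a vertex. -/
noncomputable def indeg (v : N.V) : ℕ := {u : N.V | N.E u v}.ncard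

/-- The out-degree of a vertex. -/
noncomputable def outdeg (v : N.V) : ℕ := {u : N.V | N.E v u}.ncard

/-- A vertex is a leaf if it is labelled by an element of `X`. -/
def IsLeaf (v : N.V) : Prop := ∃ x : X, N.leaf x = v

/-- `N` is a (rooted) phylogenetic network on `X`: the root has out-degree two, the
leaves are exactly the out-degree-zero vertices and have in-degree one, and every
other vertex is a tree vertex (in-degree one, out-degree two) or a reticulation
(in-degree at least two, out-degree one). -/
def ValidNet : Prop :=
  N.outdeg N.root = 2 ∧
  (∀ x : X, N.indeg (N.leaf x) = 1 ∧ N.outdeg (N.leaf x) = 0) ∧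
  (∀ v : N.V, N.outdeg v = 0 → N.IsLeaf v) ∧
  (∀ v : N.V, v ≠ N.root → ¬ N.IsLeaf v →
    (N.indeg v = 1 ∧ N.outdeg v = 2) ∨ (2 ≤ N.indeg v ∧ N.outdeg v = 1))

/-- A reticulation is a vertex of in-degree at least two. -/
def IsReticulation (v : N.V) : Prop := 2 ≤ N.indeg v

/-- `N` is binary if every reticulation has in-degree exactly two. -/
def Binary : Prop := ∀ v : N.V, N.IsReticulation v → N.indeg v = 2

/-- `N` is tree-child: every non-leaf vertex has a child of in-degree at most one
(i.e. a child that is a tree vertex or a leaf). -/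
def TreeChild : Prop := ∀ v : N.V, ¬ N.IsLeaf v → ∃ c : N.V, N.E v c ∧ N.indeg c ≤ 1

/-- The reticulation edge `(u,v)` is a shortcut: there is a directed path from `u`
to `v` avoiding the edge `(u,v)`. -/
def Shortcut (u v : N.V) : Prop :=
  N.E u v ∧ 2 ≤ N.indeg v ∧ ∃ p : N.V, p ≠ u ∧ N.E p v ∧ Relation.ReflTransGen N.E u p

def HasNoShortcut : Prop := ∀ u v : N.V, ¬ N.Shortcut u v

/-- `N` is a normal network: a tree-child phylogenetic network with no shortcut. -/
def Normal : Prop := N.ValidNet ∧ N.TreeChild ∧ N.HasNoShortcut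

/-- `N` is a (rooted) binary phylogenetic `X`-tree: a phylogenetic network with
no reticulations. -/
def IsBinTree : Prop := N.ValidNet ∧ ∀ v : N.V, N.indeg v ≤ 1

/-- There is a tree path from `v` to the leaf labelled `x`: a directed path all of
whose vertices except possibly `v` are tree vertices or leaves. -/
def TreePathTo (v : N.V) (x : X) : Prop :=
  Relation.ReflTransGen (fun a b => N.E a b ∧ N.indeg b ≤ 1) v (N.leaf x)

/-- The hybridisation number `h(N) = ∑_{v ≠ root} (indeg v − 1)`. -/
noncomputable def hyb : ℕ := ∑ v : N.V, (N.indeg v - 1)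

/-- The number of reticulations of `N`. -/
noncomputable def numRetic : ℕ := {v : N.V | N.IsReticulation v}.ncard

/-- The number of shortcuts of `N`. -/
noncomputable def numShortcuts : ℕ := {q : N.V × N.V | N.Shortcut q.1 q.2}.ncard

/-- The length of the shortcut `(u,v)`: the number of vertices in the union of the
vertex sets of all directed paths from `u` to a parent of `v`. -/
noncomputable def scLen (u v : N.V) : ℕ :=
  {w : N.V | ∃ p : N.V, N.E p v ∧ Relation.ReflTransGen N.E u w ∧
    Relation.ReflTransGen N.E w p}.ncard

/-- `{a, b}` is a cherry: the leaves labelled `a` and `b` have a common parent. -/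
def Cherry (a b : X) : Prop :=
  a ≠ b ∧ ∃ p : N.V, N.E p (N.leaf a) ∧ N.E p (N.leaf b)

/-- `{a, b}` is a reticulated cherry with reticulation leaf `a`: the parent of `a`
is a reticulation and the parent of `b` is one of its parents. -/
def RetCherry (a b : X) : Prop :=
  a ≠ b ∧ ∃ pa pb : N.V, N.E pa (N.leaf a) ∧ N.E pb (N.leaf b) ∧
    N.IsReticulation pa ∧ N.E pb pa

/-- The cluster of a vertex: the set of leaf labels reachable from it. -/
def cluster (v : N.V) : Set X := {x : X | Relation.ReflTransGen N.E v (N.leaf x)}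

/-- Isomorphism of phylogenetic networks on `X`. -/
def Iso (M : Net X) : Prop :=
  ∃ e : N.V ≃ M.V, (∀ u v : N.V, N.E u v ↔ M.E (e u) (e v)) ∧
    ∀ x : X, e (N.leaf x) = M.leaf x

end Net

/-- An embedding of the tree `T` in the network `N`: an injective map on vertices
(respecting leaf labels) together with, for each edge of `T`, a directed path in `N`
between the images, such that internal vertices of these paths avoid the image of
the map and paths of distinct edges are internally disjoint. -/
structure Emb {X : Type} (N T : Net X) where
  φ : T.V → N.V
  inj : Function.Injective φ
  leafmap : ∀ x : X, φ (T.leaf x) = N.leaf x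
  paths : T.V → T.V → List N.V
  chain : ∀ u v : T.V, T.E u v → List.Chain' N.E (φ u :: paths u v ++ [φ v])
  internal : ∀ u v : T.V, T.E u v → ∀ w ∈ paths u v, w ∉ Set.range φ
  disjoint : ∀ u v u' v' : T.V, T.E u v → T.E u' v' → (u, v) ≠ (u', v') →
    ∀ w ∈ paths u v, w ∉ paths u' v'

/-- The vertex list of the path used for the tree edge `(u,v)`. -/
def Emb.pathList {X : Type} {N T : Net X} (e : Emb N T) (u v : T.V) : List N.V :=
  e.φ u :: e.paths u v ++ [e.φ v]

/-- The set of edges of `N` used by the embedding. -/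
def Emb.edges {X : Type} {N T : Net X} (e : Emb N T) : Set (N.V × N.V) :=
  {q : N.V × N.V | ∃ u v : T.V, T.E u v ∧
    q ∈ (e.pathList u v).zip (e.pathList u v).tail}

/-- `N` displays the tree `T`. -/
def Net.Displays {X : Type} (N T : Net X) : Prop := Nonempty (Emb N T)

/-- The set of clusters of a tree (or network). -/
def Net.clusterSet {X : Type} (T : Net X) : Set (Set X) :=
  {C : Set X | ∃ v : T.V, T.cluster v = C}

/-- The display set of `N` is, up to isomorphism, the set `P` of binary
phylogenetic `X`-trees. -/
def Net.DisplaySetIs {X : Type} (N : Net X) (P : Set (Net X)) : Prop :=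
  ∀ T : Net X, T.IsBinTree → (N.Displays T ↔ ∃ S ∈ P, T.Iso S)

/-- `P` is tightly normal compatible: it is the display set of a binary normal
network on `X`. -/
def TightlyNC {X : Type} (P : Set (Net X)) : Prop :=
  ∃ N : Net X, N.Normal ∧ N.Binary ∧ N.DisplaySetIs P


/-- In a chain `x :: ps ++ [y]`, some element of `x :: ps` is a direct
predecessor of `y`. -/
lemma chain_last_pred {V : Type*} {E : V → V → Prop} (x y : V) (ps : List V)
    (h : List.Chain' E (x :: ps ++ [y])) :
    ∃ z, E z y ∧ (z = x ∨ z ∈ ps) := by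
  have hl : (x :: ps ++ [y]) = (x :: ps) ++ [y] := by simp
  rw [hl] at h
  replace h := List.isChain_append.mp h
  refine ⟨(x :: ps).getLast (by simp), ?_, ?_⟩
  · exact h.2.2 _ (by rw [List.getLast?_eq_getLast (by simp)]; rfl) y rfl
  · exact List.mem_cons.mp (List.getLast_mem (l := x :: ps) (by simp))

/-- If `{a,b}` is a cherry of a binary normal network `N`, then
`{a,b}` is a cherry of every tree in the display set of `N`. -/
theorem stmt3 {X : Type} (N : Net X) (hnorm : N.Normal) (hbin : N.Binary)
    (a b : X) (hc : N.Cherry a b)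
    (T : Net X) (hT : T.IsBinTree) (hd : N.Displays T) :
    T.Cherry a b := by
  obtain ⟨e⟩ := hd
  obtain ⟨hab, p, hpa, hpb⟩ := hc
  -- p is the unique parent of each of the leaves a, b in N
  have uniq : ∀ (x : X) (px : N.V), N.E px (N.leaf x) →
      ∀ z, N.E z (N.leaf x) → z = px := by
    intro x px hpx z hz
    obtain ⟨u, hu⟩ := Set.ncard_eq_one.mp (hnorm.1.2.1 x).1
    have h1 : z ∈ {u : N.V | N.E u (N.leaf x)} := hz
    have h2 : px ∈ {u : N.V | N.E u (N.leaf x)} := hpx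
    rw [hu] at h1 h2
    simp only [Set.mem_singleton_iff] at h1 h2
    rw [h1, h2]
  -- leaves of T have parents
  have parT : ∀ x : X, ∃ q, T.E q (T.leaf x) := by
    intro x
    obtain ⟨u, hu⟩ := Set.ncard_eq_one.mp (hT.1.2.1 x).1
    refine ⟨u, ?_⟩
    have : u ∈ {w : T.V | T.E w (T.leaf x)} := by rw [hu]; rfl
    exact this
  obtain ⟨qa, hqa⟩ := parT a
  obtain ⟨qb, hqb⟩ := parT b
  have hcha := e.chain qa (T.leaf a) hqa
  have hchb := e.chain qb (T.leaf b) hqb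
  rw [e.leafmap a] at hcha
  rw [e.leafmap b] at hchb
  obtain ⟨za, hEza, hza⟩ := chain_last_pred _ _ _ hcha
  obtain ⟨zb, hEzb, hzb⟩ := chain_last_pred _ _ _ hchb
  rw [uniq a p hpa za hEza] at hza
  rw [uniq b p hpb zb hEzb] at hzb
  have hlne : T.leaf a ≠ T.leaf b := fun h => hab (T.leaf_inj h)
  rcases hza with h1 | h1 <;> rcases hzb with h2 | h2
  · have hq : qa = qb := e.inj (h1.symm.trans h2)
    exact ⟨hab, qa, hqa, by rw [hq]; exact hqb⟩
  · exact absurd ⟨qa, h1.symm⟩ (e.internal qb (T.leaf b) hqb p h2)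
  · exact absurd ⟨qb, h2.symm⟩ (e.internal qa (T.leaf a) hqa p h1)
  · have hne : (qa, T.leaf a) ≠ (qb, T.leaf b) := fun h => hlne (congrArg Prod.snd h)
    exact absurd h2 (e.disjoint qa (T.leaf a) qb (T.leaf b) hqa hqb hne p h1)
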